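/- Let R ⊆ S be a faithfully flat extension of commutative rings of characteristic p > 0. If S is coherent, and moreover for every element a ∈ R and finitely generated ideals I, J of R the extended annihilator (0 :_S aS) and (IS ∩ JS) satisfy the base-change formulas (0 :_R a)S = (0 :_S a) and (I ∩ J)S = IS ∩ JS (which hold by flatness), then R is coherent. -/

import Mathlib

open TensorProduct

section Descent

variable {R S M : Type*} [CommRing R] [CommRing S] [Algebra R S]
  [AddCommGroup M] [Module R M]

/-- The range of the base change of a linear map is the base change of its range. -/
lemma range_baseChange_eq {A : Type*} [AddCommGroup A] [Module R A] (u : A →ₗ[R] M) :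
    LinearMap.range (u.baseChange S) = (LinearMap.range u).baseChange S := by
  apply le_antisymm
  · rintro x ⟨y, rfl⟩
    induction y using TensorProduct.induction_on with
    | zero => simp
    | tmul s a =>
        rw [LinearMap.baseChange_tmul]
        exact Submodule.tmul_mem_baseChange_of_mem s ⟨a, rfl⟩
    | add y z hy hz => rw [map_add]; exact Submodule.add_mem _ hy hz
  · rw [Submodule.baseChange_eq_span, Submodule.span_le]
    rintro - ⟨m, ⟨a, rfl⟩, rfl⟩
    exact ⟨(1 : S) ⊗ₜ a, by simp⟩

/-- Faithfully flat descent of inclusions of submodules. -/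
lemma le_of_baseChange_le [Module.FaithfullyFlat R S]
    {p q : Submodule R M} (hpq : p ≤ q)
    (h : q.baseChange S ≤ p.baseChange S) : q ≤ p := by
  set p' : Submodule R q := p.comap q.subtype with hp'
  have hj : Function.Injective (q.subtype.baseChange S) := by
    have := Module.Flat.lTensor_preserves_injective_linearMap (M := S) q.subtype
      q.injective_subtype
    rwa [← LinearMap.baseChange_eq_ltensor] at this
  -- the base-changed inclusion `S ⊗ p' → S ⊗ q` is surjective
  have hrange : LinearMap.range (p'.subtype.baseChange S) = ⊤ := by
    have hmap : Submodule.map (q.subtype.baseChange S)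
        (LinearMap.range (p'.subtype.baseChange S)) = p.baseChange S := by
      rw [← LinearMap.range_comp, ← LinearMap.baseChange_comp, range_baseChange_eq,
        LinearMap.range_comp, Submodule.range_subtype, hp', Submodule.map_comap_subtype,
        inf_eq_right.mpr hpq]
    have hmap2 : Submodule.map (q.subtype.baseChange S) ⊤ = q.baseChange S := by
      rw [Submodule.map_top, range_baseChange_eq, Submodule.range_subtype]
    rw [eq_top_iff, ← Submodule.map_le_map_iff_of_injective hj, hmap, hmap2]
    exact h
  have hsurj : Function.Surjective (p'.subtype.baseChange S) :=
    LinearMap.range_eq_top.mp hrange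
  have hexact : Function.Exact (LinearMap.lTensor S p'.subtype)
      (LinearMap.lTensor S p'.mkQ) :=
    lTensor_exact S (LinearMap.exact_subtype_mkQ p') (Submodule.mkQ_surjective p')
  have hzero : LinearMap.lTensor S p'.mkQ = 0 := by
    rw [← LinearMap.ker_eq_top, eq_top_iff]
    intro x _
    rw [LinearMap.mem_ker, hexact x]
    obtain ⟨y, hy⟩ := hsurj x
    exact ⟨y, by rw [← hy, ← LinearMap.baseChange_eq_ltensor]⟩
  have hmkQ : p'.mkQ = 0 := (Module.FaithfullyFlat.zero_iff_lTensor_zero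
    (R := R) (M := S) p'.mkQ).mpr hzero
  intro x hx
  have : p'.mkQ ⟨x, hx⟩ = 0 := by rw [hmkQ]; rfl
  rw [Submodule.mkQ_apply, Submodule.Quotient.mk_eq_zero] at this
  exact this

/-- Faithfully flat descent of finite generation of submodules. -/
lemma Submodule.FG.of_baseChange [Module.FaithfullyFlat R S]
    (p : Submodule R M) (h : (p.baseChange S).FG) : p.FG := by
  classical
  obtain ⟨t, ht⟩ := h
  -- each generator lies in the span of finitely many elements of `mk 1 '' p`
  have htsub : ∀ x : {x // x ∈ t}, ∃ u : Finset (S ⊗[R] M),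
      (u : Set (S ⊗[R] M)) ⊆ (p.map (TensorProduct.mk R S M 1) : Set (S ⊗[R] M)) ∧
      x.1 ∈ Submodule.span S (u : Set (S ⊗[R] M)) := by
    intro x
    have : x.1 ∈ p.baseChange S := ht ▸ Submodule.subset_span x.2
    rw [Submodule.baseChange_eq_span] at this
    exact Submodule.mem_span_finite_of_mem_span this
  choose u hu1 hu2 using htsub
  set U : Set (S ⊗[R] M) := ⋃ (x : {x // x ∈ t}), (u x : Set (S ⊗[R] M)) with hU
  have hUfin : U.Finite := Set.finite_iUnion fun x => (u x).finite_toSet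
  have hUsub : U ⊆ (p.map (TensorProduct.mk R S M 1) : Set (S ⊗[R] M)) := by
    rw [hU]; exact Set.iUnion_subset fun x => hu1 x
  have hUspan : Submodule.span S U = p.baseChange S := by
    apply le_antisymm
    · rw [Submodule.span_le]
      exact hUsub.trans (by rw [Submodule.baseChange_eq_span]; exact Submodule.subset_span)
    · rw [← ht, Submodule.span_le]
      intro x hx
      exact Submodule.span_mono
        (Set.subset_iUnion (fun y : {x // x ∈ t} => (u y : Set (S ⊗[R] M))) ⟨x, hx⟩)
        (hu2 ⟨x, hx⟩)
  -- pull `U` back to a finite subset of `p`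
  have hUmem : ∀ y ∈ U, ∃ m, m ∈ p ∧ TensorProduct.mk R S M 1 m = y := by
    intro y hy
    obtain ⟨m, hm, hm2⟩ := hUsub hy
    exact ⟨m, hm, hm2⟩
  choose g hg1 hg2 using hUmem
  haveI := hUfin.to_subtype
  set u₀ : Set M := Set.range (fun y : U => g y.1 y.2) with hu₀
  have hu₀fin : u₀.Finite := Set.finite_range _
  have hu₀sub : u₀ ⊆ p := by rintro - ⟨y, rfl⟩; exact hg1 y.1 y.2
  have himg : TensorProduct.mk R S M 1 '' u₀ = U := by
    apply le_antisymm
    · rintro - ⟨m, ⟨y, rfl⟩, rfl⟩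
      rw [hg2 y.1 y.2]; exact y.2
    · intro y hy
      exact ⟨g y hy, ⟨⟨y, hy⟩, rfl⟩, hg2 y hy⟩
  set K₀ : Submodule R M := Submodule.span R u₀ with hK₀
  have hK₀le : K₀ ≤ p := Submodule.span_le.mpr hu₀sub
  have hK₀bc : K₀.baseChange S = p.baseChange S := by
    rw [hK₀, Submodule.baseChange_span, himg, hUspan]
  have : p ≤ K₀ := le_of_baseChange_le hK₀le (le_of_eq hK₀bc.symm)
  have hpK : p = K₀ := le_antisymm this hK₀le
  rw [hpK]
  exact Submodule.fg_span hu₀fin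

end Descent

/-- A commutative ring is *coherent* if every finitely generated ideal is
finitely presented (as a module). -/
def IsCoherentRing (R : Type*) [CommRing R] : Prop :=
  ∀ I : Ideal R, I.FG → Module.FinitePresentation R I

/-- Let `R ⊆ S` be a faithfully flat extension of commutative rings of
characteristic `p > 0`.  If `S` is coherent, and the base-change formulas
`(0 :_R a)S = (0 :_S a)` and `(I ∩ J)S = IS ∩ JS` hold for every `a ∈ R` and all finitely
generated ideals `I, J` of `R` (as they do by flatness), then `R` is coherent. -/
theorem isCoherentRing_of_faithfullyFlat
    (R S : Type*) [CommRing R] [CommRing S] [Algebra R S]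
    (p : ℕ) [Fact p.Prime] [CharP R p] [CharP S p]
    (hext : Function.Injective (algebraMap R S))
    [Module.FaithfullyFlat R S]
    (hS : IsCoherentRing S)
    (hann : ∀ a : R,
      ((⊥ : Ideal R).colon (Ideal.span {a})).map (algebraMap R S) =
        (⊥ : Ideal S).colon (Ideal.span {algebraMap R S a}))
    (hint : ∀ I J : Ideal R, I.FG → J.FG →
      (I ⊓ J).map (algebraMap R S) =
        I.map (algebraMap R S) ⊓ J.map (algebraMap R S)) :
    IsCoherentRing R := by
  classical
  intro I hI
  obtain ⟨n, a, ha⟩ := Submodule.fg_iff_exists_fin_generating_family.mp hI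
  set f : (Fin n → R) →ₗ[R] R := Fintype.linearCombination R a with hf
  have hrange : LinearMap.range f = I := by
    rw [hf, Fintype.range_linearCombination, ha]
  set K : Submodule R (Fin n → R) := LinearMap.ker f with hK
  -- the map over S
  set e : (S ⊗[R] R) ≃ₗ[S] S := TensorProduct.AlgebraTensorModule.rid R S S with he
  set g : (S ⊗[R] (Fin n → R)) →ₗ[S] S := e.toLinearMap ∘ₗ f.baseChange S with hg
  -- the kernel of `g` is finitely generated since `S` is coherent
  have hJfg : (LinearMap.range g).FG := by
    rw [LinearMap.range_eq_map]
    exact Submodule.FG.map _ (Module.Finite.fg_top (R := S) (M := S ⊗[R] (Fin n → R)))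
  haveI hFP : Module.FinitePresentation S (LinearMap.range g) := hS _ hJfg
  have hkerg : (LinearMap.ker g).FG := by
    have := Module.FinitePresentation.fg_ker g.rangeRestrict
      g.surjective_rangeRestrict
    rwa [LinearMap.ker_rangeRestrict] at this
  -- identify the kernel of `g` with the base change of `K`
  have hexact : Function.Exact (LinearMap.lTensor S K.subtype) (LinearMap.lTensor S f) :=
    Module.Flat.lTensor_exact S f.exact_subtype_ker_map
  have hker_eq : LinearMap.ker g = K.baseChange S := by
    ext x
    rw [hg, LinearMap.mem_ker, LinearMap.comp_apply]
    have h1 : e.toLinearMap (f.baseChange S x) = 0 ↔ f.baseChange S x = 0 := by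
      constructor
      · intro h0
        have := e.injective (a₁ := f.baseChange S x) (a₂ := 0) (by simpa using h0)
        exact this
      · intro h0; rw [h0]; simp
    rw [h1]
    have h2 : f.baseChange S x = LinearMap.lTensor S f x := by
      rw [← LinearMap.baseChange_eq_ltensor]
    rw [h2, hexact x]
    constructor
    · rintro ⟨y, rfl⟩
      have : K.subtype.baseChange S y ∈ LinearMap.range (K.subtype.baseChange S) := ⟨y, rfl⟩
      rw [range_baseChange_eq, Submodule.range_subtype] at this
      rwa [LinearMap.baseChange_eq_ltensor] at this
    · intro hx
      have : x ∈ LinearMap.range (K.subtype.baseChange S) := by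
        rwa [range_baseChange_eq, Submodule.range_subtype]
      obtain ⟨y, hy⟩ := this
      exact ⟨y, by rw [← hy, ← LinearMap.baseChange_eq_ltensor]⟩
  -- descend finite generation of the kernel
  have hKfg : K.FG := by
    apply Submodule.FG.of_baseChange (S := S)
    rwa [← hker_eq]
  -- conclude
  have hmem : ∀ x, f x ∈ I := fun x => hrange ▸ LinearMap.mem_range_self f x
  set fI : (Fin n → R) →ₗ[R] I := f.codRestrict (I : Submodule R R) hmem with hfI
  have hsurj : Function.Surjective fI := by
    rintro ⟨y, hy⟩
    rw [← hrange] at hy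
    obtain ⟨x, hx⟩ := hy
    exact ⟨x, Subtype.ext hx⟩
  refine Module.finitePresentation_of_surjective fI hsurj ?_
  rwa [hfI, LinearMap.ker_codRestrict]
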